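/- The maps α and β define a free action of the Klein four-group ℤ/2 × ℤ/2 on S⁶ × S⁵. Precisely: α ∘ α = id, β ∘ β = id, and α ∘ β = β ∘ α on S⁶ × S⁵, and none of the three maps α, β, α ∘ β has a fixed point in S⁶ × S⁵. -/

import Mathlib

open scoped BigOperators

/-- `S⁶ × S⁵`: the set of pairs `(x, y)` with `x ∈ ℝ⁷`, `y ∈ ℝ⁶`, `‖x‖ = 1`, `‖y‖ = 1`
(written via sums of squares). -/
def sphereProd : Set ((Fin 7 → ℝ) × (Fin 6 → ℝ)) :=
  {p | (∑ i, p.1 i ^ 2) = 1 ∧ (∑ j, p.2 j ^ 2) = 1}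

/-- `α(x₁,…,x₇, y₁,…,y₆) = (−x₁,…,−x₇, −y₁, y₂,…,y₆)`. -/
def alphaMap (p : (Fin 7 → ℝ) × (Fin 6 → ℝ)) : (Fin 7 → ℝ) × (Fin 6 → ℝ) :=
  (fun i => -p.1 i, fun j => if j = 0 then -p.2 j else p.2 j)

/-- `β(x₁,…,x₇, y₁,…,y₆) = (x₁,…,x₇, −y₁,…,−y₆)`. -/
def betaMap (p : (Fin 7 → ℝ) × (Fin 6 → ℝ)) : (Fin 7 → ℝ) × (Fin 6 → ℝ) :=
  (p.1, fun j => -p.2 j)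

lemma first_ne_zero {p : (Fin 7 → ℝ) × (Fin 6 → ℝ)} (hp : p ∈ sphereProd) :
    p.1 ≠ fun i => -p.1 i := by
  intro h
  have hz : ∀ i, p.1 i = 0 := by
    intro i
    have := congrFun h i
    linarith
  have : (∑ i, p.1 i ^ 2) = 0 := by
    simp [hz]
  rw [hp.1] at this
  norm_num at this

/-- The maps `α` and `β` define a free action of the Klein four-group `ℤ/2 × ℤ/2` on
`S⁶ × S⁵`: they map the space to itself, `α ∘ α = id`, `β ∘ β = id`, `α ∘ β = β ∘ α`,
and none of `α`, `β`, `α ∘ β` has a fixed point in `S⁶ × S⁵`. -/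
theorem klein_four_free_action_on_S6_x_S5 :
    Set.MapsTo alphaMap sphereProd sphereProd ∧
    Set.MapsTo betaMap sphereProd sphereProd ∧
    (∀ p ∈ sphereProd, alphaMap (alphaMap p) = p) ∧
    (∀ p ∈ sphereProd, betaMap (betaMap p) = p) ∧
    (∀ p ∈ sphereProd, alphaMap (betaMap p) = betaMap (alphaMap p)) ∧
    (∀ p ∈ sphereProd, alphaMap p ≠ p) ∧
    (∀ p ∈ sphereProd, betaMap p ≠ p) ∧
    (∀ p ∈ sphereProd, alphaMap (betaMap p) ≠ p) := by
  refine ⟨?_, ?_, ?_, ?_, ?_, ?_, ?_, ?_⟩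
  · intro p hp
    refine ⟨?_, ?_⟩
    · simpa [alphaMap, neg_pow] using hp.1
    · have : (∑ j, (if j = 0 then -p.2 j else p.2 j) ^ 2) = ∑ j, p.2 j ^ 2 := by
        refine Finset.sum_congr rfl fun j _ => ?_
        split <;> ring
      simpa [alphaMap, this] using hp.2
  · intro p hp
    exact ⟨by simpa [betaMap] using hp.1, by simpa [betaMap, neg_pow] using hp.2⟩
  · intro p _
    simp only [alphaMap]
    refine Prod.ext (by funext i; simp) (by funext j; dsimp only; split <;> simp_all)
  · intro p _
    simp [betaMap]
  · intro p _
    simp only [alphaMap, betaMap]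
    refine Prod.ext rfl (by funext j; dsimp only; split <;> simp)
  · intro p hp h
    exact first_ne_zero hp (congrArg Prod.fst h).symm
  · intro p hp h
    have h2 := congrArg Prod.snd h
    simp only [betaMap] at h2
    have hz : ∀ j, p.2 j = 0 := by
      intro j
      have := congrFun h2 j
      linarith
    have : (∑ j, p.2 j ^ 2) = 0 := by simp [hz]
    rw [hp.2] at this
    norm_num at this
  · intro p hp h
    have h1 := congrArg Prod.fst h
    simp only [alphaMap, betaMap] at h1
    exact first_ne_zero hp h1.symm
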